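/- For s > 0 let p_s : ℕ → ℝ be the Poisson probability mass function p_s(x) = e^{−s}·s^x/x!, and let H(s) = −Σ_{x=0}^∞ p_s(x)·log p_s(x). There exists a constant C > 0 such that for every s ∈ (0, 1/2] and every r ∈ {2, 3, 4}, | Σ_{x=0}^∞ p_s(x)·| −log p_s(x) − H(s) |^r − s·(log(1/s))^r | ≤ C·s²·(log(1/s))^r. -/

import Mathlib

open Real

private lemma log_fact_le (n : ℕ) :
    Real.log (Nat.factorial n : ℝ) ≤ (n : ℝ) * ((n : ℝ) - 1) := by
  induction n with
  | zero => simp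
  | succ n ih =>
    have hfac : (0:ℝ) < (Nat.factorial n : ℝ) := by exact_mod_cast n.factorial_pos
    rw [Nat.factorial_succ, Nat.cast_mul,
      Real.log_mul (by positivity) (ne_of_gt hfac)]
    have h1 : Real.log ((n : ℝ) + 1) ≤ (n : ℝ) := by
      have := Real.log_le_sub_one_of_pos (x := (n:ℝ)+1) (by positivity)
      linarith
    have hn : (0:ℝ) ≤ (n:ℝ) := Nat.cast_nonneg n
    push_cast
    nlinarith [ih]

private lemma pow8_le_fact (n : ℕ) : (n + 1) ^ 8 ≤ 20000 * Nat.factorial n := by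
  induction n with
  | zero => norm_num [Nat.factorial]
  | succ n ih =>
    by_cases h : n < 15
    · interval_cases n <;> norm_num [Nat.factorial]
    · push_neg at h
      have h1 : 16 * (n + 2) ≤ 17 * (n + 1) := by omega
      have h2 : (16 * (n + 2)) ^ 8 ≤ (17 * (n + 1)) ^ 8 := Nat.pow_le_pow_left h1 8
      rw [mul_pow, mul_pow] at h2
      have h3 : 17 ^ 8 * (n + 1) ^ 8 ≤ 2 * 16 ^ 8 * (n + 1) ^ 8 := by
        have : (17:ℕ) ^ 8 ≤ 2 * 16 ^ 8 := by norm_num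
        exact Nat.mul_le_mul_right _ this
      have h4 : (n + 2) ^ 8 ≤ 2 * (n + 1) ^ 8 := by
        have := le_trans h2 h3
        omega
      calc (n + 1 + 1) ^ 8 = (n + 2) ^ 8 := by ring_nf
        _ ≤ 2 * (n + 1) ^ 8 := h4
        _ ≤ 2 * (20000 * Nat.factorial n) := by omega
        _ ≤ 20000 * Nat.factorial (n + 1) := by
            rw [Nat.factorial_succ]
            have : 2 * Nat.factorial n ≤ (n + 1) * Nat.factorial n :=
              Nat.mul_le_mul_right _ (by omega)
            omega

set_option maxHeartbeats 2000000 in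
/-- Small-time asymptotics of the absolute central moments of the Poisson
information: with `p_s` the Poisson(s) pmf and `H(s)` its entropy, there is a
constant `C > 0` such that for every `s ∈ (0, 1/2]` and every `r ∈ {2, 3, 4}`,
`|∑_x p_s(x)·|-log p_s(x) - H(s)|^r - s·(log(1/s))^r| ≤ C·s²·(log(1/s))^r`. -/
theorem poisson_information_central_moments_small_time : ∃ C : ℝ, 0 < C ∧
    ∀ s : ℝ, 0 < s → s ≤ 1/2 → ∀ r : ℕ, (r = 2 ∨ r = 3 ∨ r = 4) →
      let p : ℕ → ℝ := fun x => Real.exp (-s) * s ^ x / (Nat.factorial x : ℝ)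
      let H : ℝ := -∑' x : ℕ, p x * Real.log (p x)
      |(∑' x : ℕ, p x * |(-Real.log (p x) - H)| ^ r) - s * (Real.log (1/s)) ^ r| ≤
        C * s ^ 2 * (Real.log (1/s)) ^ r := by
  refine ⟨10 ^ 8, by norm_num, ?_⟩
  intro s hs hs2 r hr
  intro p H
  obtain ⟨hr2, hr4⟩ : 2 ≤ r ∧ r ≤ 4 := by
    rcases hr with rfl | rfl | rfl <;> exact ⟨by norm_num, by norm_num⟩
  have hp : ∀ x, p x = Real.exp (-s) * s ^ x / (Nat.factorial x : ℝ) := fun _ => rfl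
  have hH0 : H = -∑' x : ℕ, p x * Real.log (p x) := rfl
  clear_value p H
  obtain ⟨L, hLdef⟩ : ∃ L : ℝ, Real.log (1/s) = L := ⟨_, rfl⟩
  rw [hLdef]
  have hL2 : Real.log 2 ≤ L := by
    rw [← hLdef]
    apply Real.log_le_log (by norm_num)
    rw [le_div_iff₀ hs]; linarith
  have hlog2 : (0.6931471803 : ℝ) < Real.log 2 := Real.log_two_gt_d9
  have hLhalf : (1/2 : ℝ) < L := by linarith
  have hL0 : (0:ℝ) < L := by linarith
  have hls : Real.log s = -L := by
    rw [← hLdef, one_div, Real.log_inv]; ring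
  have hsL : s ≤ L := by linarith
  have hfac : ∀ x : ℕ, (0:ℝ) < (Nat.factorial x : ℝ) := fun x => by
    exact_mod_cast x.factorial_pos
  have hppos : ∀ x, 0 < p x := by
    intro x; rw [hp]; positivity
  have hlogp : ∀ x, Real.log (p x) = -s + x * Real.log s - Real.log (Nat.factorial x : ℝ) := by
    intro x
    rw [hp, Real.log_div (by positivity) (ne_of_gt (hfac x)),
      Real.log_mul (Real.exp_ne_zero _) (by positivity), Real.log_exp, Real.log_pow]
  -- exp series
  have hexp : HasSum (fun x : ℕ => s ^ x / (Nat.factorial x : ℝ)) (Real.exp s) := by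
    rw [Real.exp_eq_exp_ℝ]
    exact NormedSpace.expSeries_div_hasSum_exp s
  have hexpmul : Real.exp (-s) * Real.exp s = 1 := by
    rw [← Real.exp_add]; simp
  have hP1 : HasSum p 1 := by
    have h := hexp.mul_left (Real.exp (-s))
    rw [hexpmul] at h
    have hfun : (fun x : ℕ => Real.exp (-s) * (s ^ x / (Nat.factorial x : ℝ))) = p := by
      funext x; rw [hp, mul_div_assoc]
    rwa [hfun] at h
  -- mean
  have hXP : HasSum (fun x : ℕ => (x:ℝ) * p x) s := by
    have h1 : HasSum (fun x : ℕ => ((x+1 : ℕ) : ℝ) * p (x+1)) s := by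
      have hfun : (fun x : ℕ => ((x+1 : ℕ) : ℝ) * p (x+1)) = fun x => s * p x := by
        funext x
        rw [hp, hp, Nat.factorial_succ]
        have hx : ((x+1 : ℕ) : ℝ) ≠ 0 := by positivity
        push_cast
        field_simp
        ring
      rw [hfun]
      simpa using hP1.mul_left s
    have h2 := (hasSum_nat_add_iff (f := fun x : ℕ => (x:ℝ) * p x) 1).1 h1
    simpa using h2
  -- the M block
  obtain ⟨M, hMdef⟩ : ∃ M : ℝ, (∑' x : ℕ, p x * Real.log (Nat.factorial x : ℝ)) = M :=
    ⟨_, rfl⟩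
  have hlognn : ∀ x : ℕ, 0 ≤ Real.log (Nat.factorial x : ℝ) := fun x =>
    Real.log_nonneg (by exact_mod_cast x.factorial_pos)
  have hfle : ∀ x : ℕ, Real.log (Nat.factorial x : ℝ) ≤ (x:ℝ)^2 := by
    intro x
    refine le_trans (log_fact_le x) ?_
    nlinarith [Nat.cast_nonneg (α := ℝ) x]
  have hple : ∀ x : ℕ, p x ≤ s ^ x / (Nat.factorial x : ℝ) := by
    intro x
    rw [hp]
    have h1 : Real.exp (-s) ≤ 1 := Real.exp_le_one_iff.2 (by linarith)
    have h2 : Real.exp (-s) * s ^ x ≤ s ^ x := by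
      nlinarith [pow_nonneg hs.le x]
    exact (div_le_div_iff_of_pos_right (hfac x)).2 h2
  have hMsummable : Summable (fun x : ℕ => p x * Real.log (Nat.factorial x : ℝ)) := by
    refine Summable.of_nonneg_of_le
      (fun x => mul_nonneg (hppos x).le (hlognn x))
      (fun x => ?_)
      ((summable_pow_mul_geometric_of_norm_lt_one 2
        (r := s) (by rw [Real.norm_eq_abs, abs_of_pos hs]; linarith)))
    have hple2 : p x ≤ s ^ x := by
      refine (hple x).trans ?_
      rw [div_le_iff₀ (hfac x)]
      have h2 : (1:ℝ) ≤ (Nat.factorial x : ℝ) := by exact_mod_cast x.factorial_pos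
      nlinarith [pow_nonneg hs.le x]
    calc p x * Real.log (Nat.factorial x : ℝ) ≤ s ^ x * (x:ℝ)^2 :=
          mul_le_mul hple2 (hfle x) (hlognn x) (pow_nonneg hs.le x)
      _ = (x:ℝ)^2 * s ^ x := by ring
  have hM0 : 0 ≤ M := by
    rw [← hMdef]
    exact tsum_nonneg fun x => mul_nonneg (hppos x).le (hlognn x)
  have hMle : M ≤ s ^ 2 := by
    have hmaj : HasSum (fun x : ℕ => Real.exp (-s) * s^2 * (s ^ x / (Nat.factorial x : ℝ)))
        (s ^ 2) := by
      have h := hexp.mul_left (Real.exp (-s) * s^2)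
      have : Real.exp (-s) * s^2 * Real.exp s = s^2 := by
        rw [mul_comm (Real.exp (-s)) (s^2), mul_assoc, hexpmul, mul_one]
      rwa [this] at h
    have hterm : ∀ x : ℕ, p (x+2) * Real.log (Nat.factorial (x+2) : ℝ)
        ≤ Real.exp (-s) * s^2 * (s ^ x / (Nat.factorial x : ℝ)) := by
      intro x
      have hlf : Real.log (Nat.factorial (x+2) : ℝ)
          ≤ ((x:ℝ)+2) * ((x:ℝ)+1) := by
        have := log_fact_le (x+2)
        push_cast at this ⊢
        nlinarith [this]
      have hf2 : (Nat.factorial (x+2) : ℝ)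
          = ((x:ℝ)+2) * (((x:ℝ)+1) * (Nat.factorial x : ℝ)) := by
        rw [Nat.factorial_succ, Nat.factorial_succ]
        push_cast
        ring
      rw [hp]
      have hpos : (0:ℝ) ≤ Real.exp (-s) * s ^ (x+2) / (Nat.factorial (x+2) : ℝ) := by positivity
      calc Real.exp (-s) * s ^ (x+2) / (Nat.factorial (x+2) : ℝ)
            * Real.log (Nat.factorial (x+2) : ℝ)
          ≤ Real.exp (-s) * s ^ (x+2) / (Nat.factorial (x+2) : ℝ)
            * (((x:ℝ)+2) * ((x:ℝ)+1)) := mul_le_mul_of_nonneg_left hlf hpos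
        _ = Real.exp (-s) * s^2 * (s ^ x / (Nat.factorial x : ℝ)) := by
            rw [hf2]
            have h1 : ((x:ℝ)+2) ≠ 0 := by positivity
            have h2 : ((x:ℝ)+1) ≠ 0 := by positivity
            field_simp
            ring
    have hsum2 : Summable (fun x : ℕ => p (x+2) * Real.log (Nat.factorial (x+2) : ℝ)) :=
      (summable_nat_add_iff (f := fun x : ℕ => p x * Real.log (Nat.factorial x : ℝ)) 2).2
        hMsummable
    have hsum1 : Summable (fun x : ℕ => p (x+1) * Real.log (Nat.factorial (x+1) : ℝ)) :=
      (summable_nat_add_iff (f := fun x : ℕ => p x * Real.log (Nat.factorial x : ℝ)) 1).2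
        hMsummable
    have hsplit : M = ∑' x : ℕ, p (x+2) * Real.log (Nat.factorial (x+2) : ℝ) := by
      have e1 := Summable.tsum_eq_zero_add (f := fun x : ℕ => p x * Real.log (Nat.factorial x : ℝ))
        hMsummable
      have e2 := Summable.tsum_eq_zero_add
        (f := fun x : ℕ => p (x+1) * Real.log (Nat.factorial (x+1) : ℝ)) hsum1
      rw [← hMdef, e1, e2]
      have t0 : p 0 * Real.log (Nat.factorial 0 : ℝ) = 0 := by norm_num [Nat.factorial]
      have t1 : p (0+1) * Real.log (Nat.factorial (0+1) : ℝ) = 0 := by norm_num [Nat.factorial]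
      simp only [t0, t1, zero_add]
    rw [hsplit]
    calc ∑' x : ℕ, p (x+2) * Real.log (Nat.factorial (x+2) : ℝ)
        ≤ ∑' x : ℕ, Real.exp (-s) * s^2 * (s ^ x / (Nat.factorial x : ℝ)) :=
          Summable.tsum_le_tsum hterm hsum2 hmaj.summable
      _ = s ^ 2 := hmaj.tsum_eq
  -- entropy value
  have hHval : H = s + s * L + M := by
    have h1 := (hP1.mul_left s).add ((hXP.mul_left L).add hMsummable.hasSum)
    have h2 := h1.neg
    have hfun : (fun x : ℕ =>
        -(s * p x + (L * ((x:ℝ) * p x) + p x * Real.log (Nat.factorial x : ℝ))))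
        = fun x : ℕ => p x * Real.log (p x) := by
      funext x
      rw [hlogp, hls]
      ring
    rw [hfun] at h2
    rw [hH0, h2.tsum_eq, hMdef]
    ring
  -- centered information
  obtain ⟨q, hqe⟩ : ∃ q : ℕ → ℝ,
      q = fun x : ℕ => ((x:ℝ) - s) * L + (Real.log (Nat.factorial x : ℝ) - M) := ⟨_, rfl⟩
  have hqx : ∀ x : ℕ, q x = ((x:ℝ) - s) * L + (Real.log (Nat.factorial x : ℝ) - M) := by
    intro x; rw [hqe]
  have hq : ∀ x, -Real.log (p x) - H = q x := by
    intro x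
    rw [hlogp, hls, hHval, hqx]
    ring
  have hTcongr : (∑' x : ℕ, p x * |(-Real.log (p x) - H)| ^ r)
      = ∑' x : ℕ, p x * |q x| ^ r := tsum_congr fun x => by rw [hq x]
  rw [hTcongr]
  have hs2' : s ^ 2 ≤ s * L := by nlinarith
  have hs4 : s ^ 2 ≤ 1/4 := by nlinarith
  -- global bound on |q|
  have habs : ∀ x : ℕ, |q x| ≤ 3 * ((x:ℝ)+1)^2 * L := by
    intro x
    have hxn : (0:ℝ) ≤ (x:ℝ) := Nat.cast_nonneg x
    have h1 : Real.log (Nat.factorial x : ℝ) ≤ (x:ℝ)^2 := hfle x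
    have h2 : 0 ≤ Real.log (Nat.factorial x : ℝ) := hlognn x
    have hB : (0:ℝ) ≤ ((x:ℝ)+1)^2 * (2*L - 1) :=
      mul_nonneg (sq_nonneg _) (by linarith)
    have l1 : 0 ≤ (x:ℝ) * L := mul_nonneg hxn hL0.le
    have l2 : s * L ≤ L/2 := by nlinarith
    have l3 : M ≤ L/2 := by nlinarith [hMle]
    have l4 : (1:ℝ) ≤ ((x:ℝ)+1)^2 := by nlinarith
    have l5 : 3 * L ≤ 3*((x:ℝ)+1)^2*L := by nlinarith [l4, hL0.le]
    have u1 : (x:ℝ)^2 ≤ 2*L*(x:ℝ)^2 + 4*(x:ℝ)*L + 2*L := by nlinarith [hB]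
    have u2 : 0 ≤ L*((x:ℝ)^2 + (x:ℝ) + 1) := mul_nonneg hL0.le (by positivity)
    have u3 : 0 ≤ s * L := mul_nonneg hs.le hL0.le
    rw [hqx, abs_le]
    constructor
    · linarith
    · linarith
  have hLrpos : (0:ℝ) < L ^ r := pow_pos hL0 r
  have hqpow : ∀ x : ℕ, |q x| ^ r ≤ 81 * ((x:ℝ)+1)^8 * L ^ r := by
    intro x
    have hxn : (0:ℝ) ≤ (x:ℝ) := Nat.cast_nonneg x
    calc |q x| ^ r ≤ (3 * ((x:ℝ)+1)^2 * L) ^ r :=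
          pow_le_pow_left₀ (abs_nonneg _) (habs x) r
      _ = (3 * ((x:ℝ)+1)^2) ^ r * L ^ r := by rw [mul_pow]
      _ ≤ (3 * ((x:ℝ)+1)^2) ^ 4 * L ^ r := by
          apply mul_le_mul_of_nonneg_right _ hLrpos.le
          exact pow_le_pow_right₀ (by nlinarith) hr4
      _ = 81 * ((x:ℝ)+1)^8 * L ^ r := by ring
  -- term bound
  have htermb : ∀ x : ℕ, p x * |q x| ^ r ≤ 1620000 * L ^ r * s ^ x := by
    intro x
    have hf8 : (((x+1 : ℕ)) : ℝ) ^ 8 ≤ 20000 * (Nat.factorial x : ℝ) := by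
      exact_mod_cast pow8_le_fact x
    have hf8' : ((x:ℝ)+1) ^ 8 ≤ 20000 * (Nat.factorial x : ℝ) := by
      push_cast at hf8; exact hf8
    have hd : ((x:ℝ)+1)^8 / (Nat.factorial x : ℝ) ≤ 20000 := by
      rw [div_le_iff₀ (hfac x)]; linarith
    calc p x * |q x| ^ r
        ≤ (s ^ x / (Nat.factorial x : ℝ)) * (81 * ((x:ℝ)+1)^8 * L ^ r) :=
          mul_le_mul (hple x) (hqpow x) (pow_nonneg (abs_nonneg _) r) (by positivity)
      _ = 81 * L ^ r * s ^ x * (((x:ℝ)+1)^8 / (Nat.factorial x : ℝ)) := by ring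
      _ ≤ 81 * L ^ r * s ^ x * 20000 :=
          mul_le_mul_of_nonneg_left hd (by positivity)
      _ = 1620000 * L ^ r * s ^ x := by ring
  have hgeo : Summable (fun x : ℕ => s ^ x) :=
    summable_geometric_of_lt_one hs.le (by linarith)
  have hTsum : Summable (fun x : ℕ => p x * |q x| ^ r) :=
    Summable.of_nonneg_of_le
      (fun x => mul_nonneg (hppos x).le (pow_nonneg (abs_nonneg _) r))
      htermb ((hgeo.mul_left (1620000 * L ^ r)))
  -- split the sum
  have hT1 : Summable (fun x : ℕ => p (x+1) * |q (x+1)| ^ r) :=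
    (summable_nat_add_iff (f := fun x : ℕ => p x * |q x| ^ r) 1).2 hTsum
  have hT2 : Summable (fun x : ℕ => p (x+1+1) * |q (x+1+1)| ^ r) :=
    (summable_nat_add_iff (f := fun x : ℕ => p (x+1) * |q (x+1)| ^ r) 1).2 hT1
  have hsplitT : (∑' x : ℕ, p x * |q x| ^ r)
      = p 0 * |q 0| ^ r + (p 1 * |q 1| ^ r + ∑' b : ℕ, p (b+1+1) * |q (b+1+1)| ^ r) := by
    have e1 := Summable.tsum_eq_zero_add (f := fun x : ℕ => p x * |q x| ^ r) hTsum
    have e2 := Summable.tsum_eq_zero_add (f := fun x : ℕ => p (x+1) * |q (x+1)| ^ r) hT1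
    rw [e1, e2]
  rw [hsplitT]
  -- tail bound
  have htail0 : 0 ≤ ∑' b : ℕ, p (b+1+1) * |q (b+1+1)| ^ r :=
    tsum_nonneg fun b => mul_nonneg (hppos _).le (pow_nonneg (abs_nonneg _) r)
  have htail : (∑' b : ℕ, p (b+1+1) * |q (b+1+1)| ^ r) ≤ 3240000 * (s^2 * L^r) := by
    have hmajsum : Summable (fun b : ℕ => (1620000 * L^r * s^2) * s^b) :=
      hgeo.mul_left _
    have hterm2 : ∀ b : ℕ, p (b+1+1) * |q (b+1+1)| ^ r ≤ (1620000 * L^r * s^2) * s^b := by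
      intro b
      refine (htermb (b+1+1)).trans_eq ?_
      ring
    calc (∑' b : ℕ, p (b+1+1) * |q (b+1+1)| ^ r)
        ≤ ∑' b : ℕ, (1620000 * L^r * s^2) * s^b := Summable.tsum_le_tsum hterm2 hT2 hmajsum
      _ = (1620000 * L^r * s^2) * (1-s)⁻¹ := by
          rw [tsum_mul_left, tsum_geometric_of_lt_one hs.le (by linarith)]
      _ ≤ (1620000 * L^r * s^2) * 2 := by
          apply mul_le_mul_of_nonneg_left _ (by positivity)
          have h12 : (1/2:ℝ) ≤ 1 - s := by linarith
          calc (1-s)⁻¹ ≤ (1/2:ℝ)⁻¹ := inv_anti₀ (by norm_num) h12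
            _ = 2 := by norm_num
      _ = 3240000 * (s^2 * L^r) := by ring
  -- x = 0 term
  have hp0 : p 0 = Real.exp (-s) := by rw [hp]; norm_num [Nat.factorial]
  have hq0 : q 0 = -(s*L + M) := by
    rw [hqx]; norm_num [Nat.factorial]; ring
  have ht0nn : 0 ≤ p 0 * |q 0| ^ r :=
    mul_nonneg (hppos 0).le (pow_nonneg (abs_nonneg _) r)
  have ht0 : p 0 * |q 0| ^ r ≤ 16 * (s^2 * L^r) := by
    have habs0 : |q 0| ≤ 2*s*L := by
      rw [hq0, abs_neg, abs_of_nonneg (by nlinarith [hM0, mul_nonneg hs.le hL0.le])]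
      nlinarith [hs2', hMle]
    have h1 : p 0 ≤ 1 := by rw [hp0]; exact Real.exp_le_one_iff.2 (by linarith)
    have h2 : |q 0| ^ r ≤ (2*s*L) ^ r := pow_le_pow_left₀ (abs_nonneg _) habs0 r
    have h4 : (2:ℝ)^r ≤ 16 := by
      calc (2:ℝ)^r ≤ 2^4 := pow_le_pow_right₀ one_le_two hr4
        _ = 16 := by norm_num
    have h5 : s^r ≤ s^2 := pow_le_pow_of_le_one hs.le (by linarith) hr2
    have h6 : (2:ℝ)^r * s^r ≤ 16 * s^2 :=
      mul_le_mul h4 h5 (pow_nonneg hs.le r) (by norm_num)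
    calc p 0 * |q 0| ^ r ≤ 1 * (2*s*L)^r :=
          mul_le_mul h1 h2 (pow_nonneg (abs_nonneg _) r) zero_le_one
      _ = (2:ℝ)^r * s^r * L^r := by rw [one_mul, mul_pow, mul_pow]
      _ ≤ 16 * s^2 * L^r := mul_le_mul_of_nonneg_right h6 hLrpos.le
      _ = 16 * (s^2 * L^r) := by ring
  -- x = 1 term
  have hp1 : p 1 = Real.exp (-s) * s := by rw [hp]; norm_num [Nat.factorial]
  have hq1 : q 1 = (1-s)*L - M := by
    rw [hqx]; norm_num [Nat.factorial]; ring
  have hA0 : 0 ≤ (1-s)*L - M := by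
    nlinarith [hMle, hs4, mul_nonneg (by linarith : (0:ℝ) ≤ 1/2 - s) (by linarith : (0:ℝ) ≤ L - 1/2)]
  have hAL : (1-s)*L - M ≤ L := by nlinarith [hM0, mul_nonneg hs.le hL0.le]
  have hq1abs : |q 1| = (1-s)*L - M := by rw [hq1, abs_of_nonneg hA0]
  have hArL : ((1-s)*L - M)^r ≤ L^r := pow_le_pow_left₀ hA0 hAL r
  have hApos : 0 ≤ ((1-s)*L - M)^r := pow_nonneg hA0 r
  have ht1up : p 1 * |q 1| ^ r ≤ s * L^r := by
    rw [hq1abs, hp1]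
    have h1 : Real.exp (-s) * s ≤ s := by
      nlinarith [Real.exp_le_one_iff.2 (by linarith : -s ≤ 0), hs.le]
    exact mul_le_mul h1 hArL hApos hs.le
  have ht1low : s * L^r - p 1 * |q 1| ^ r ≤ 9 * (s^2 * L^r) := by
    rw [hq1abs, hp1]
    set A : ℝ := (1-s)*L - M with hAdef
    set u : ℝ := (L - A)/L with hudef
    have hu0 : 0 ≤ u := div_nonneg (by linarith) hL0.le
    have hu2s : u ≤ 2*s := by
      rw [hudef, div_le_iff₀ hL0]
      have : L - A = s*L + M := by rw [hAdef]; ring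
      rw [this]
      nlinarith [hMle, hs2']
    have hber : L^r * (1 - r*u) ≤ A^r := by
      have hb := one_add_mul_le_pow (a := -u) (by nlinarith : (-2:ℝ) ≤ -u) r
      have h1u : 1 + -u = A / L := by
        rw [hudef]; field_simp; ring
      rw [h1u] at hb
      have h3 := mul_le_mul_of_nonneg_right hb hLrpos.le
      rw [div_pow, div_mul_cancel₀ _ (ne_of_gt hLrpos)] at h3
      calc L^r * (1 - r*u) = (1 + r * -u) * L^r := by ring
        _ ≤ A^r := h3
    have hru : (r:ℝ)*u ≤ 8*s := by
      have hrc : (r:ℝ) ≤ 4 := by exact_mod_cast hr4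
      nlinarith [hu0, hu2s, Nat.cast_nonneg (α := ℝ) r]
    have hAr_low : L^r - A^r ≤ 8*s*L^r := by
      have e : L^r - L^r*(1 - (r:ℝ)*u) = (r:ℝ)*u*L^r := by ring
      have h7 := mul_le_mul_of_nonneg_right hru hLrpos.le
      linarith [hber]
    have hexpba : (1-s)*s ≤ Real.exp (-s) * s :=
      mul_le_mul_of_nonneg_right (by linarith [Real.add_one_le_exp (-s)]) hs.le
    have k1 : (1-s)*s*A^r ≤ Real.exp (-s) * s * A^r :=
      mul_le_mul_of_nonneg_right hexpba hApos
    have k2 : s*(L^r - A^r) ≤ s*(8*s*L^r) := mul_le_mul_of_nonneg_left hAr_low hs.le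
    have k3 : s^2*A^r ≤ s^2*L^r := mul_le_mul_of_nonneg_left hArL (sq_nonneg s)
    linarith [k1, k2, k3]
  -- assemble
  have hsq : (0:ℝ) ≤ s^2 * L^r := by positivity
  rw [abs_le]
  constructor
  · linarith [ht0nn, htail0, ht0, htail, ht1up, ht1low, hsq]
  · linarith [ht0nn, htail0, ht0, htail, ht1up, ht1low, hsq]
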